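/- Let m ≥ 1, let O = {l ∈ ℝᵐ : lᵢ > 0 for all i} be the open positive orthant, and let f : O → ℝᵐ be locally Lipschitz with |fᵢ(l)| ≤ C for all l ∈ O, all i, and some constant C ≥ 0. Then for every l₀ ∈ O there exists a unique differentiable curve l : [0,∞) → O with l(0) = l₀ satisfying lᵢ'(t) = fᵢ(l(t))·lᵢ(t) for all i and all t ≥ 0; moreover every such solution satisfies l₀ᵢ·e^{−Ct} ≤ lᵢ(t) ≤ l₀ᵢ·e^{Ct} for all i and t ≥ 0. -/

import Mathlib

open Real Set
open Metric


lemma exists_lipschitzOnWith_of_locallyLipschitz {E F : Type*} [NormedAddCommGroup E]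
    [NormedAddCommGroup F] {f : E → F} (hf : LocallyLipschitz f) {s : Set E}
    (hs : IsCompact s) : ∃ K : NNReal, LipschitzOnWith K f s := by
  rcases s.eq_empty_or_nonempty with rfl | ⟨z, hz⟩
  · exact ⟨1, by simp⟩
  have hfc : Continuous f := hf.continuous
  choose K t ht hK using hf
  have hcov : s ⊆ ⋃ x : E, interior (t x) := fun x hx =>
    mem_iUnion.2 ⟨x, mem_interior_iff_mem_nhds.2 (ht x)⟩
  obtain ⟨A, hA⟩ := hs.elim_finite_subcover (fun x => interior (t x))
    (fun _ => isOpen_interior) hcov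
  have hA' : s ⊆ ⋃ a : A, interior (t (a : E)) := by
    intro x hx
    obtain ⟨i, hiA, hxi⟩ := Set.mem_iUnion₂.1 (hA hx)
    exact Set.mem_iUnion.2 ⟨⟨i, hiA⟩, hxi⟩
  obtain ⟨δ, hδ, hleb⟩ := lebesgue_number_lemma_of_metric (ι := A) hs
      (fun a => isOpen_interior) hA'
  set K₀ : NNReal := A.sup K with hK₀
  obtain ⟨M, hM⟩ := (Metric.isBounded_iff).1 (hs.image hfc).isBounded
  refine ⟨K₀ + Real.toNNReal (M / δ), LipschitzOnWith.of_dist_le_mul fun x hx y hy => ?_⟩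
  have hcoe : ((K₀ + Real.toNNReal (M / δ) : NNReal) : ℝ) = (K₀ : ℝ) + max (M / δ) 0 := by
    push_cast [Real.coe_toNNReal']; ring
  rcases lt_or_ge (dist x y) δ with h | h
  · obtain ⟨a, ha⟩ := hleb x hx
    have hxt : x ∈ t (a : E) := interior_subset (ha (mem_ball_self hδ))
    have hyt : y ∈ t (a : E) := interior_subset (ha (by simpa [mem_ball, dist_comm] using h))
    have h1 : (K (a : E) : ℝ) ≤ (K₀ : ℝ) := by exact_mod_cast Finset.le_sup a.2
    calc dist (f x) (f y) ≤ K (a : E) * dist x y := (hK (a : E)).dist_le_mul x hxt y hyt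
      _ ≤ (K₀ + Real.toNNReal (M / δ) : NNReal) * dist x y := by
          rw [hcoe]
          apply mul_le_mul_of_nonneg_right _ dist_nonneg
          have := le_max_right (M / δ) 0
          linarith
  · have hd : dist (f x) (f y) ≤ M := hM (mem_image_of_mem f hx) (mem_image_of_mem f hy)
    have hM0 : 0 ≤ M := le_trans dist_nonneg (hM (mem_image_of_mem f hz) (mem_image_of_mem f hz))
    have h2 : M ≤ M / δ * dist x y := by
      calc M = M / δ * δ := by field_simp
        _ ≤ M / δ * dist x y := mul_le_mul_of_nonneg_left h (by positivity)
    calc dist (f x) (f y) ≤ M := hd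
      _ ≤ M / δ * dist x y := h2
      _ ≤ (K₀ + Real.toNNReal (M / δ) : NNReal) * dist x y := by
          rw [hcoe]
          apply mul_le_mul_of_nonneg_right _ dist_nonneg
          have := le_max_left (M / δ) 0
          have := K₀.coe_nonneg
          linarith

/-- `l : ℝ → (Fin m → ℝ)` is a solution on `[0,∞)` of the flow `lᵢ' = fᵢ(l)·lᵢ` with
initial value `l₀`, staying in the open positive orthant. -/
def IsFlowSolution (m : ℕ) (f : (Fin m → ℝ) → Fin m → ℝ) (l₀ : Fin m → ℝ)
    (l : ℝ → Fin m → ℝ) : Prop :=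
  (∀ t, 0 ≤ t → ∀ i, 0 < l t i) ∧ l 0 = l₀ ∧
    ∀ t, 0 ≤ t → ∀ i,
      HasDerivWithinAt (fun s => l s i) (f (l t) i * l t i) (Set.Ici (0 : ℝ)) t

theorem flow_longtime_existence_uniqueness (m : ℕ) (hm : 1 ≤ m)
    (f : (Fin m → ℝ) → Fin m → ℝ) (C : ℝ) (hC : 0 ≤ C)
    (hf : LocallyLipschitzOn {l : Fin m → ℝ | ∀ i, 0 < l i} f)
    (hbd : ∀ l : Fin m → ℝ, (∀ i, 0 < l i) → ∀ i, |f l i| ≤ C)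
    (l₀ : Fin m → ℝ) (hl₀ : ∀ i, 0 < l₀ i) :
    (∃ l : ℝ → Fin m → ℝ, IsFlowSolution m f l₀ l) ∧
      (∀ l l' : ℝ → Fin m → ℝ, IsFlowSolution m f l₀ l → IsFlowSolution m f l₀ l' →
        ∀ t, 0 ≤ t → l t = l' t) ∧
      (∀ l : ℝ → Fin m → ℝ, IsFlowSolution m f l₀ l → ∀ t, 0 ≤ t → ∀ i,
        l₀ i * Real.exp (-(C * t)) ≤ l t i ∧ l t i ≤ l₀ i * Real.exp (C * t)) := by
  classical
  -- the substituted vector field g(u) = f(exp ∘ u)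
  set g : (Fin m → ℝ) → (Fin m → ℝ) := fun u => f (fun i => Real.exp (u i)) with hg
  set u₀ : Fin m → ℝ := fun i => Real.log (l₀ i) with hu₀
  have hexp_pos : ∀ u : Fin m → ℝ, ∀ i, (0:ℝ) < Real.exp (u i) := fun u i => Real.exp_pos _
  -- g is locally Lipschitz on all of ℝᵐ
  have hgL : LocallyLipschitz g := by
    intro u
    have hexpC : ContDiff ℝ 1 (fun u : Fin m → ℝ => fun i => Real.exp (u i)) :=
      contDiff_pi.2 fun i => Real.contDiff_exp.comp (contDiff_pi.1 contDiff_id i)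
    obtain ⟨K₁, t₁, ht₁, hlip₁⟩ := hexpC.locallyLipschitz u
    obtain ⟨K₂, t₂, ht₂, hlip₂⟩ := hf (x := fun i => Real.exp (u i)) (fun i => Real.exp_pos _)
    obtain ⟨v, hvo, hvm, hvs⟩ := mem_nhdsWithin.1 ht₂
    refine ⟨K₂ * K₁, t₁ ∩ ((fun w : Fin m → ℝ => fun i => Real.exp (w i)) ⁻¹' v),
      Filter.inter_mem ht₁ ((hexpC.continuous.continuousAt (x := u)).preimage_mem_nhds
        (hvo.mem_nhds hvm)), ?_⟩
    exact hlip₂.comp (hlip₁.mono inter_subset_left)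
      (fun w hw => hvs ⟨hw.2, fun i => Real.exp_pos _⟩)
  -- g is bounded by C in sup norm
  have hgC : ∀ u : Fin m → ℝ, ‖g u‖ ≤ C := by
    intro u
    rw [pi_norm_le_iff_of_nonneg hC]
    intro i
    rw [Real.norm_eq_abs]
    exact hbd _ (fun i => Real.exp_pos _) i
  -- the logarithm of any flow solution solves u' = g(u) on [0,∞)
  have key : ∀ l : ℝ → Fin m → ℝ, IsFlowSolution m f l₀ l →
      ∀ t, 0 ≤ t → HasDerivWithinAt (fun s i => Real.log (l s i))
        (g (fun i => Real.log (l t i))) (Set.Ici (0:ℝ)) t := by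
    rintro l ⟨hpos, hl0, hder⟩ t ht
    apply hasDerivWithinAt_pi.2
    intro i
    have h1 : HasDerivWithinAt (fun s => Real.log (l s i))
        ((l t i)⁻¹ * (f (l t) i * l t i)) (Set.Ici (0:ℝ)) t :=
      (Real.hasDerivAt_log (ne_of_gt (hpos t ht i))).comp_hasDerivWithinAt t (hder t ht i) |> fun h => by exact h
    have h2 : (fun j => Real.exp (Real.log (l t j))) = l t :=
      funext fun j => Real.exp_log (hpos t ht j)
    have h3 : g (fun j => Real.log (l t j)) i = f (l t) i := by rw [hg]; simp only [h2]
    have h4 : g (fun j => Real.log (l t j)) i = (l t i)⁻¹ * (f (l t) i * l t i) := by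
      rw [h3]
      field_simp [ne_of_gt (hpos t ht i)]
    rw [h4]
    exact h1
  -- bound on the log of any flow solution
  have hKb : ∀ l : ℝ → Fin m → ℝ, IsFlowSolution m f l₀ l →
      ∀ t, 0 ≤ t → ‖(fun i => Real.log (l t i)) - u₀‖ ≤ C * t := by
    intro l hl t ht
    have h0 : (fun i => Real.log (l 0 i)) = u₀ := by rw [hl.2.1]
    have := Convex.norm_image_sub_le_of_norm_hasDerivWithin_le
      (f := fun s i => Real.log (l s i)) (f' := fun s => g (fun i => Real.log (l s i)))
      (fun x hx => key l hl x hx) (fun x _ => hgC _) (convex_Ici 0)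
      (self_mem_Ici (a := (0:ℝ))) ht
    simpa [Real.norm_eq_abs, abs_of_nonneg ht, hl.2.1, hu₀] using this
  -- scalar bound, per component
  have hbnd : ∀ l : ℝ → Fin m → ℝ, IsFlowSolution m f l₀ l → ∀ t, 0 ≤ t → ∀ i,
      l₀ i * Real.exp (-(C * t)) ≤ l t i ∧ l t i ≤ l₀ i * Real.exp (C * t) := by
    intro l hl t ht i
    have h1 : |Real.log (l t i) - Real.log (l₀ i)| ≤ C * t := by
      have := hKb l hl t ht
      have h2 := norm_le_pi_norm ((fun i => Real.log (l t i)) - u₀) i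
      rw [Real.norm_eq_abs] at h2
      calc |Real.log (l t i) - Real.log (l₀ i)|
          = |((fun i => Real.log (l t i)) - u₀) i| := by simp [hu₀]
        _ ≤ _ := h2
        _ ≤ C * t := this
    rw [abs_le] at h1
    constructor
    · calc l₀ i * Real.exp (-(C * t)) = Real.exp (Real.log (l₀ i) + -(C * t)) := by
            rw [Real.exp_add, Real.exp_log (hl₀ i)]
        _ ≤ Real.exp (Real.log (l t i)) := Real.exp_le_exp.2 (by linarith)
        _ = l t i := Real.exp_log (hl.1 t ht i)
    · calc l t i = Real.exp (Real.log (l t i)) := (Real.exp_log (hl.1 t ht i)).symm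
        _ ≤ Real.exp (Real.log (l₀ i) + C * t) := Real.exp_le_exp.2 (by linarith)
        _ = l₀ i * Real.exp (C * t) := by rw [Real.exp_add, Real.exp_log (hl₀ i)]
  refine ⟨?_, ?_, hbnd⟩
  · -- existence
    have exist_b : ∀ b : ℝ, 0 ≤ b → ∃ u : ℝ → (Fin m → ℝ), u 0 = u₀ ∧
        ∀ t ∈ Icc (0:ℝ) b, HasDerivWithinAt u (g (u t)) (Icc (0:ℝ) b) t := by
      intro b hb
      obtain ⟨K, hK⟩ := exists_lipschitzOnWith_of_locallyLipschitz hgL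
        (isCompact_closedBall u₀ (C * b))
      have hpl : IsPicardLindelof (fun _ x => g x) (tmin := 0) (tmax := b) ⟨0, le_refl 0, hb⟩ u₀
          ⟨C * b, mul_nonneg hC hb⟩ 0 ⟨C, hC⟩ K :=
        IsPicardLindelof.of_time_independent (fun x _ => hgC x) hK (by simp [max_eq_left hb]; exact le_rfl)
      obtain ⟨u, hu0, hud⟩ := hpl.exists_eq_forall_mem_Icc_hasDerivWithinAt₀
      exact ⟨u, hu0, hud⟩
    choose ub hub0 hub using fun n : ℕ => exist_b n (Nat.cast_nonneg n)
    have hubb : ∀ n : ℕ, ∀ t ∈ Icc (0:ℝ) (n:ℝ), ‖ub n t - u₀‖ ≤ C * t := by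
      intro n t ht
      have := Convex.norm_image_sub_le_of_norm_hasDerivWithin_le
        (f' := fun s => g (ub n s)) (hub n) (fun x _ => hgC _) (convex_Icc 0 (n:ℝ))
        ⟨le_refl 0, Nat.cast_nonneg n⟩ ht
      simpa [hub0 n, Real.norm_eq_abs, abs_of_nonneg ht.1] using this
    have hcons : ∀ n N : ℕ, n ≤ N → ∀ t ∈ Icc (0:ℝ) (n:ℝ), ub n t = ub N t := by
      intro n N hnN
      obtain ⟨K, hK⟩ := exists_lipschitzOnWith_of_locallyLipschitz hgL
        (isCompact_closedBall u₀ (C * N))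
      have hnN' : (n:ℝ) ≤ (N:ℝ) := Nat.cast_le.2 hnN
      have derivn : ∀ t ∈ Ico (0:ℝ) (n:ℝ), HasDerivWithinAt (ub n) (g (ub n t)) (Ici t) t := by
        intro t ht
        exact ((hub n t ⟨ht.1, ht.2.le⟩).mono (Icc_subset_Icc ht.1 le_rfl)).mono_of_mem_nhdsWithin
          (Icc_mem_nhdsGE_of_mem ⟨le_rfl, ht.2⟩)
      have derivN : ∀ t ∈ Ico (0:ℝ) (n:ℝ), HasDerivWithinAt (ub N) (g (ub N t)) (Ici t) t := by
        intro t ht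
        have htN : t < (N:ℝ) := lt_of_lt_of_le ht.2 hnN'
        exact ((hub N t ⟨ht.1, htN.le⟩).mono (Icc_subset_Icc ht.1 le_rfl)).mono_of_mem_nhdsWithin
          (Icc_mem_nhdsGE_of_mem ⟨le_rfl, htN⟩)
      have memn : ∀ t ∈ Ico (0:ℝ) (n:ℝ), ub n t ∈ Metric.closedBall u₀ (C * N) := by
        intro t ht
        rw [Metric.mem_closedBall, dist_eq_norm]
        exact (hubb n t ⟨ht.1, ht.2.le⟩).trans
          (mul_le_mul_of_nonneg_left (le_trans ht.2.le hnN') hC)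
      have memN : ∀ t ∈ Ico (0:ℝ) (n:ℝ), ub N t ∈ Metric.closedBall u₀ (C * N) := by
        intro t ht
        rw [Metric.mem_closedBall, dist_eq_norm]
        exact (hubb N t ⟨ht.1, le_trans ht.2.le hnN'⟩).trans
          (mul_le_mul_of_nonneg_left (le_trans ht.2.le hnN') hC)
      have := ODE_solution_unique_of_mem_Icc_right (v := fun _ x => g x)
        (s := fun _ => Metric.closedBall u₀ (C * N)) (fun _ _ => hK)
        (fun t ht => (hub n t ht).continuousWithinAt)
        derivn memn
        (fun t ht => ((hub N t ⟨ht.1, le_trans ht.2 hnN'⟩).continuousWithinAt).mono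
          (Icc_subset_Icc le_rfl hnN'))
        derivN memN
        (by rw [hub0 n, hub0 N])
      exact fun t ht => this ht
    set u : ℝ → Fin m → ℝ := fun t => ub (⌊t⌋₊ + 1) t with hu
    have hu_eq : ∀ N : ℕ, ∀ t ∈ Icc (0:ℝ) (N:ℝ), u t = ub N t := by
      intro N t ht
      have htn : t ∈ Icc (0:ℝ) ((⌊t⌋₊ + 1 : ℕ):ℝ) :=
        ⟨ht.1, by push_cast; exact (Nat.lt_floor_add_one t).le⟩
      rcases le_total (⌊t⌋₊ + 1) N with h | h
      · exact hcons _ N h t htn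
      · exact (hcons N _ h t ht).symm
    have hu0 : u 0 = u₀ := by
      show ub (⌊(0:ℝ)⌋₊ + 1) 0 = u₀
      rw [Nat.floor_zero]
      exact hub0 1
    have huder : ∀ t, 0 ≤ t → HasDerivWithinAt u (g (u t)) (Ici (0:ℝ)) t := by
      intro t ht
      have htN : t < ((⌊t⌋₊ + 1 : ℕ):ℝ) := by push_cast; exact Nat.lt_floor_add_one t
      have htmem : t ∈ Icc (0:ℝ) ((⌊t⌋₊ + 1 : ℕ):ℝ) := ⟨ht, htN.le⟩
      have h1 : HasDerivWithinAt u (g (ub (⌊t⌋₊ + 1) t)) (Icc (0:ℝ) ((⌊t⌋₊ + 1 : ℕ):ℝ)) t :=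
        (hub (⌊t⌋₊ + 1) t htmem).congr (fun s hs => hu_eq _ s hs) (hu_eq _ t htmem)
      rw [← hu_eq _ t htmem] at h1
      refine h1.mono_of_mem_nhdsWithin ?_
      have h2 : Ici (0:ℝ) ∩ Iio ((⌊t⌋₊ + 1 : ℕ):ℝ) ∈ nhdsWithin t (Ici (0:ℝ)) :=
        Filter.inter_mem self_mem_nhdsWithin (mem_nhdsWithin_of_mem_nhds (Iio_mem_nhds htN))
      exact Filter.mem_of_superset h2 (fun x hx => ⟨hx.1, hx.2.le⟩)
    refine ⟨fun t i => Real.exp (u t i), fun t ht i => Real.exp_pos _, ?_, ?_⟩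
    · funext i
      show Real.exp (u 0 i) = l₀ i
      rw [hu0]
      simpa [hu₀] using Real.exp_log (hl₀ i)
    · intro t ht i
      have hcomp := hasDerivWithinAt_pi.1 (huder t ht) i
      have hch := (Real.hasDerivAt_exp (u t i)).comp_hasDerivWithinAt t hcomp
      rw [mul_comm]
      exact hch
  · -- uniqueness
    intro l l' hl hl' T hT
    obtain ⟨K, hK⟩ := exists_lipschitzOnWith_of_locallyLipschitz hgL
      (isCompact_closedBall u₀ (C * T))
    have hmem : ∀ lc : ℝ → Fin m → ℝ, IsFlowSolution m f l₀ lc → ∀ t ∈ Ico (0:ℝ) T,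
        (fun i => Real.log (lc t i)) ∈ Metric.closedBall u₀ (C * T) := by
      intro lc hlc t ht
      rw [Metric.mem_closedBall, dist_eq_norm]
      exact (hKb lc hlc t ht.1).trans (mul_le_mul_of_nonneg_left ht.2.le hC)
    have hEq := ODE_solution_unique_of_mem_Icc_right (v := fun _ x => g x)
      (s := fun _ => Metric.closedBall u₀ (C * T)) (fun _ _ => hK)
      (f := fun s i => Real.log (l s i)) (g := fun s i => Real.log (l' s i))
      (fun t ht => ((key l hl t ht.1).continuousWithinAt).mono Icc_subset_Ici_self)
      (fun t ht => (key l hl t ht.1).mono (Ici_subset_Ici.2 ht.1))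
      (hmem l hl)
      (fun t ht => ((key l' hl' t ht.1).continuousWithinAt).mono Icc_subset_Ici_self)
      (fun t ht => (key l' hl' t ht.1).mono (Ici_subset_Ici.2 ht.1))
      (hmem l' hl')
      (by simp [hl.2.1, hl'.2.1]) ⟨hT, le_refl T⟩
    funext i
    have hi : Real.log (l T i) = Real.log (l' T i) := congrFun hEq i
    calc l T i = Real.exp (Real.log (l T i)) := (Real.exp_log (hl.1 T hT i)).symm
      _ = Real.exp (Real.log (l' T i)) := by rw [hi]
      _ = l' T i := Real.exp_log (hl'.1 T hT i)
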